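/- arXiv:2409.17297 — 2 statements merged into one kernel-verified Lean document; each statement's English description precedes it below -/
import Mathlib

section
/- Let K be a positive self-adjoint (possibly unbounded) operator with bounded inverse, V a bounded self-adjoint operator with polar decomposition V = U|V|, and λ > 0. Then the Birman–Schwinger operator B = λ U|V|^{1/2} K^{-1} |V|^{1/2} is isospectral (away from 0) to the self-adjoint operator λ K^{-1/2} V K^{-1/2}; in particular B has real spectrum. -/
open StarAlgebra

lemma my_cfc_mem_elemental {A : Type*} [CStarAlgebra A] (f : ℂ → ℂ) (a : A)
    [ha : IsStarNormal a] : cfc f a ∈ elemental ℂ a := by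
  by_cases h : ContinuousOn f (spectrum ℂ a)
  · rw [cfc_apply f a ha h, cfcHom_eq_of_isStarNormal]
    exact SetLike.coe_mem _
  · rw [cfc_apply_of_not_continuousOn a h]
    exact zero_mem _

lemma my_commute_of_mem_elemental {A : Type*} [CStarAlgebra A] {a b y : A}
    (h : Commute b a) (hstar : Commute b (star a))
    (hy : y ∈ elemental ℂ a) : Commute b y := by
  induction hy using StarAlgebra.elemental.induction_on with
  | self => exact h
  | star_self => exact hstar
  | algebraMap r => exact (Algebra.commutes r b).symm
  | add u hu v hv pu pv => exact pu.add_right pv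
  | mul u hu v hv pu pv => exact pu.mul_right pv
  | closure s hs hp v hv =>
    have hcl : IsClosed {x : A | b * x = x * b} :=
      isClosed_eq (continuous_const.mul continuous_id) (continuous_id.mul continuous_const)
    exact hcl.closure_subset_iff.mpr (fun u hu => hp u hu) hv

lemma my_commute_sqrt {H : Type*} [NormedAddCommGroup H] [InnerProductSpace ℂ H]
    [CompleteSpace H] {a b : H →L[ℂ] H} (ha : 0 ≤ a) (h : Commute b a) :
    Commute b (CFC.sqrt a) := by
  have hsa : IsSelfAdjoint a := .of_nonneg ha
  have hn : IsStarNormal a := hsa.isStarNormal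
  have hmem : CFC.sqrt a ∈ elemental ℂ a := by
    rw [CFC.sqrt_eq_cfc, cfc_nnreal_eq_real _ a ha, cfc_real_eq_complex _ hsa]
    exact my_cfc_mem_elemental _ a
  exact my_commute_of_mem_elemental h (hsa.star_eq.symm ▸ h) hmem

set_option synthInstance.maxHeartbeats 1000000 in
set_option maxHeartbeats 2000000 in
/-- Birman–Schwinger principle (isospectrality): let `K` be a positive
self-adjoint operator with `K ≥ c > 0` (hence with bounded inverse `Kinv`),
`V` a bounded self-adjoint operator with polar decomposition `V = U * |V|`
where `U` commutes with `|V|`, and `λ > 0`.  Then the Birman–Schwinger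
operator `B = λ U |V|^{1/2} K⁻¹ |V|^{1/2}` is isospectral away from `0` to
the self-adjoint operator `λ K^{-1/2} V K^{-1/2}`; in particular `B` has
real spectrum. -/
theorem stmt_11
    {H : Type*} [NormedAddCommGroup H] [InnerProductSpace ℂ H]
    [CompleteSpace H]
    (K Kinv V U : H →L[ℂ] H) (c : ℝ) (hc : 0 < c)
    (hK : IsSelfAdjoint K)
    (hKc : ∀ ψ : H, c * ‖ψ‖ ^ 2 ≤ (inner ℂ ψ (K ψ) : ℂ).re)
    (hKinv : K * Kinv = 1) (hKinv' : Kinv * K = 1)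
    (hKinvpos : (0 : H →L[ℂ] H) ≤ Kinv)
    (hV : IsSelfAdjoint V)
    (hpolar : V = U * CFC.sqrt (V * V))
    (hcomm : U * CFC.sqrt (V * V) = CFC.sqrt (V * V) * U)
    (lam : ℝ) (hlam : 0 < lam)
    (B : H →L[ℂ] H)
    (hB : B = lam • (U * CFC.sqrt (CFC.sqrt (V * V)) * Kinv *
      CFC.sqrt (CFC.sqrt (V * V)))) :
    spectrum ℂ B \ {0} =
      spectrum ℂ (lam • (CFC.sqrt Kinv * V * CFC.sqrt Kinv)) \ {0} ∧
    IsSelfAdjoint (lam • (CFC.sqrt Kinv * V * CFC.sqrt Kinv)) ∧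
    ∀ z ∈ spectrum ℂ B, z.im = 0 := by
  set M := CFC.sqrt (V * V) with hMdef
  set W := CFC.sqrt M with hWdef
  set S := CFC.sqrt Kinv with hSdef
  have hM : (0 : H →L[ℂ] H) ≤ M := CFC.sqrt_nonneg _
  have hS : (0 : H →L[ℂ] H) ≤ S := CFC.sqrt_nonneg _
  have hS_sa : IsSelfAdjoint S := .of_nonneg hS
  have hW2 : W * W = M := CFC.sqrt_mul_sqrt_self M hM
  have hS2 : S * S = Kinv := CFC.sqrt_mul_sqrt_self Kinv hKinvpos
  have hUW : Commute U W := my_commute_sqrt hM hcomm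
  have hSVS_sa : IsSelfAdjoint (S * V * S) := by
    rw [IsSelfAdjoint, star_mul, star_mul, hS_sa.star_eq, hV.star_eq, mul_assoc]
  have hT_sa : IsSelfAdjoint (lam • (S * V * S)) := by
    rw [IsSelfAdjoint, star_smul, star_trivial, hSVS_sa.star_eq]
  have h1 : B = (lam • (U * W * S)) * (S * W) := by
    rw [hB, smul_mul_assoc]
    congr 1
    rw [← hS2]
    noncomm_ring
  have h2 : (S * W) * (lam • (U * W * S)) = lam • (S * V * S) := by
    rw [mul_smul_comm]
    congr 1
    have : S * W * (U * W * S) = S * (W * U * W) * S := by noncomm_ring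
    rw [this, ← hUW.eq, mul_assoc U W W, hW2, ← hpolar]
  have key : spectrum ℂ B \ {0} = spectrum ℂ (lam • (S * V * S)) \ {0} := by
    rw [h1, spectrum.nonzero_mul_comm, h2]
  refine ⟨key, hT_sa, ?_⟩
  intro z hz
  rcases eq_or_ne z 0 with rfl | hz0
  · simp
  · have hzmem : z ∈ spectrum ℂ (lam • (S * V * S)) := by
      have : z ∈ spectrum ℂ B \ {0} := ⟨hz, hz0⟩
      rw [key] at this
      exact this.1
    exact hT_sa.im_eq_zero_of_mem_spectrum hzmem
end

section
/- Block variational inequality: let A be a bounded self-adjoint operator on H = H₁ ⊕ H₂ which is block-diagonal, and let B be self-adjoint and block off-diagonal (i.e., B maps H₁ into H₂ and H₂ into H₁). Then for every κ ∈ ℝ, inf spec(A + κB) ≤ inf spec(A); that is, an off-diagonal perturbation can only lower or preserve the bottom of the spectrum at leading order in the sense that κ = 0 is a local maximum of κ ↦ inf spec(A + κB). -/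
set_option maxHeartbeats 1000000
set_option synthInstance.maxHeartbeats 200000

open ContinuousLinearMap

/-- Block variational inequality: let `H = H₁ ⊕ H₂` be encoded by an
orthogonal projection `P` (self-adjoint idempotent, projecting onto `H₁`).
Let `A` be bounded self-adjoint and block-diagonal (commuting with `P`),
and `B` bounded self-adjoint and block off-diagonal (its quadratic form
vanishes on the range of `P` and on the range of `1 - P`).  Then for every
`κ ∈ ℝ`, `inf spec (A + κB) ≤ inf spec A`; i.e. `κ = 0` is a (global, hence
local) maximum of `κ ↦ inf spec (A + κB)`. -/
theorem stmt_16
    {H : Type*} [NormedAddCommGroup H] [InnerProductSpace ℂ H]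
    [CompleteSpace H]
    (P A B : H →L[ℂ] H)
    (hP : IsSelfAdjoint P) (hPidem : P * P = P)
    (hA : IsSelfAdjoint A) (hB : IsSelfAdjoint B)
    (hAP : A * P = P * A)
    (hB1 : ∀ ψ : H, (inner ℂ (P ψ) (B (P ψ)) : ℂ) = 0)
    (hB2 : ∀ ψ : H, (inner ℂ ((1 - P) ψ) (B ((1 - P) ψ)) : ℂ) = 0)
    (κ : ℝ) :
    sInf {x : ℝ | (x : ℂ) ∈ spectrum ℂ (A + κ • B)} ≤
      sInf {x : ℝ | (x : ℂ) ∈ spectrum ℂ A} := by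
  classical
  by_cases htriv : Subsingleton H
  · have : A + κ • B = A := Subsingleton.elim _ _
    rw [this]
  have hHnt : Nontrivial H := not_subsingleton_iff_nontrivial.mp htriv
  have hCLMnt : Nontrivial (H →L[ℂ] H) := by
    obtain ⟨x, hx⟩ := exists_ne (0 : H)
    refine ⟨1, 0, fun h => hx ?_⟩
    calc x = (1 : H →L[ℂ] H) x := rfl
      _ = (0 : H →L[ℂ] H) x := by rw [h]
      _ = 0 := rfl
  have hPadj : ContinuousLinearMap.adjoint P = P := hP.adjoint_eq
  -- quadratic form zero gives operator zero (over ℂ)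
  have key : ∀ T : H →L[ℂ] H, (∀ ψ : H, (inner ℂ (T ψ) ψ : ℂ) = 0) → T = 0 := by
    intro T hT
    have := (inner_map_self_eq_zero (T : H →ₗ[ℂ] H)).mp (fun x => hT x)
    ext x
    exact congrFun (congrArg DFunLike.coe this) x
  have hPBP : P * B * P = 0 := by
    apply key
    intro ψ
    have : (inner ℂ ((P * B * P) ψ) ψ : ℂ) = inner ℂ (B (P ψ)) (P ψ) := by
      simp only [ContinuousLinearMap.mul_apply]
      rw [← hPadj, ContinuousLinearMap.adjoint_inner_left, hPadj]
    rw [this, ← inner_conj_symm, hB1 ψ, map_zero]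
  have hQsa : IsSelfAdjoint (1 - P : H →L[ℂ] H) := by
    rw [IsSelfAdjoint, star_sub, star_one, hP]
  have hQBQ : (1 - P) * B * (1 - P) = 0 := by
    have hQadj : ContinuousLinearMap.adjoint (1 - P) = 1 - P := hQsa.adjoint_eq
    apply key
    intro ψ
    have : (inner ℂ (((1 - P) * B * (1 - P)) ψ) ψ : ℂ)
        = inner ℂ (B ((1 - P) ψ)) ((1 - P) ψ) := by
      simp only [ContinuousLinearMap.mul_apply]
      rw [← hQadj, ContinuousLinearMap.adjoint_inner_left, hQadj]
    rw [this, ← inner_conj_symm, hB2 ψ, map_zero]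
  -- B = PB + BP
  have hBsplit : P * B + B * P = B := by
    have h2 : B - P * B - (B * P - P * B * P) = 0 := by
      have h := hQBQ
      simp only [sub_mul, mul_sub, one_mul, mul_one] at h
      exact h
    rw [hPBP] at h2
    linear_combination (norm := abel) -h2
  -- the symmetry U = 2P - 1
  set U : H →L[ℂ] H := P + P - 1 with hUdef
  have hU2 : U * U = 1 := by
    simp only [hUdef, sub_mul, mul_sub, add_mul, mul_add, one_mul, mul_one, hPidem]
    abel
  have hUBU : U * B * U = -B := by
    simp only [hUdef, sub_mul, mul_sub, add_mul, mul_add, one_mul, mul_one, hPBP]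
    calc 0 + 0 - B * P + (0 + 0 - B * P) - (P * B + P * B - B)
        = B - (P * B + B * P) - (P * B + B * P) := by abel
      _ = -B := by rw [hBsplit]; abel
  have hUAU : U * A * U = A := by
    have hAU : A * U = U * A := by
      simp only [hUdef, mul_sub, sub_mul, mul_add, add_mul, mul_one, one_mul, hAP]
    rw [← hAU, mul_assoc, hU2, mul_one]
  -- spectra of A + κB and A - κB agree
  have hconjop : U * (A + κ • B) * U = A - κ • B := by
    rw [mul_add, add_mul, hUAU, mul_smul_comm, smul_mul_assoc, hUBU, smul_neg,
      ← sub_eq_add_neg]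
  have hconj : spectrum ℂ (A - κ • B) = spectrum ℂ (A + κ • B) := by
    rw [← hconjop]
    exact spectrum.units_conjugate (u := ⟨U, U, hU2, hU2⟩)
  -- self-adjointness
  have hsB : IsSelfAdjoint (κ • B) := by
    rw [IsSelfAdjoint, star_smul, star_trivial, hB]
  have hApB : IsSelfAdjoint (A + κ • B) := hA.add hsB
  have hAmB : IsSelfAdjoint (A - κ • B) := hA.sub hsB
  -- convert to real spectra
  have hsetA : {x : ℝ | (x : ℂ) ∈ spectrum ℂ A} = spectrum ℝ A := by
    ext x
    exact IsSelfAdjoint.coe_mem_spectrum_complex (ha := hA)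
  have hsetApB : {x : ℝ | (x : ℂ) ∈ spectrum ℂ (A + κ • B)} = spectrum ℝ (A + κ • B) := by
    ext x
    exact IsSelfAdjoint.coe_mem_spectrum_complex (ha := hApB)
  have hspecEq : spectrum ℝ (A - κ • B) = spectrum ℝ (A + κ • B) := by
    ext x
    rw [← IsSelfAdjoint.coe_mem_spectrum_complex (ha := hAmB),
      ← IsSelfAdjoint.coe_mem_spectrum_complex (ha := hApB), hconj]
  rw [hsetA, hsetApB]
  set m : ℝ := sInf (spectrum ℝ (A + κ • B)) with hm
  -- lower bounds
  have hbdd : BddBelow (spectrum ℝ (A + κ • B)) := (spectrum.isBounded _).bddBelow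
  have hmle : ∀ x ∈ spectrum ℝ (A + κ • B), m ≤ x := fun x hx => csInf_le hbdd hx
  have hsaC : IsSelfAdjoint (algebraMap ℝ (H →L[ℂ] H) m) := by
    rw [Algebra.algebraMap_eq_smul_one, IsSelfAdjoint, star_smul, star_trivial, star_one]
  have hposP : (0 : H →L[ℂ] H) ≤ (A + κ • B) - algebraMap ℝ _ m := by
    rw [StarOrderedRing.nonneg_iff_spectrum_nonneg (R := ℝ) _ (hApB.sub hsaC)]
    intro x hx
    rw [← spectrum.sub_singleton_eq] at hx
    obtain ⟨y, hy, z, hz, rfl⟩ := hx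
    rw [Set.mem_singleton_iff] at hz
    subst hz
    simpa using sub_nonneg.mpr (hmle y hy)
  have hposM : (0 : H →L[ℂ] H) ≤ (A - κ • B) - algebraMap ℝ _ m := by
    rw [StarOrderedRing.nonneg_iff_spectrum_nonneg (R := ℝ) _ (hAmB.sub hsaC)]
    intro x hx
    rw [← spectrum.sub_singleton_eq, hspecEq] at hx
    obtain ⟨y, hy, z, hz, rfl⟩ := hx
    rw [Set.mem_singleton_iff] at hz
    subst hz
    simpa using sub_nonneg.mpr (hmle y hy)
  have hsum : (0 : H →L[ℂ] H) ≤ (A - algebraMap ℝ _ m) + (A - algebraMap ℝ _ m) := by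
    have h := add_nonneg hposP hposM
    have e : ((A + κ • B) - algebraMap ℝ (H →L[ℂ] H) m) + ((A - κ • B) - algebraMap ℝ _ m)
        = (A - algebraMap ℝ _ m) + (A - algebraMap ℝ _ m) := by abel
    rwa [e] at h
  have hsaD : IsSelfAdjoint (A - algebraMap ℝ (H →L[ℂ] H) m) := hA.sub hsaC
  have hDpos : (0 : H →L[ℂ] H) ≤ A - algebraMap ℝ _ m := by
    rw [ContinuousLinearMap.nonneg_iff_isPositive] at hsum ⊢
    refine ⟨hsaD.isSymmetric, fun x => ?_⟩
    have h2 := hsum.2 x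
    simp only [ContinuousLinearMap.reApplyInnerSelf, ContinuousLinearMap.add_apply,
      inner_add_left, map_add] at h2 ⊢
    linarith
  have hfinal : ∀ x ∈ spectrum ℝ A, m ≤ x := by
    intro x hx
    have h := (StarOrderedRing.nonneg_iff_spectrum_nonneg (R := ℝ) _ hsaD).mp hDpos
    have hx' : x - m ∈ spectrum ℝ (A - algebraMap ℝ (H →L[ℂ] H) m) := by
      rw [← spectrum.sub_singleton_eq]
      exact Set.sub_mem_sub hx rfl
    linarith [h _ hx']
  exact le_csInf (hA.spectrum_nonempty) hfinal
end
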